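/- Let κ be a regular infinite cardinal, identified with the set of ordinals below κ, and let K = {A ⊆ κ : |A| < κ}. Then exp(κ_K) asymorphically embeds into exp(κ_{K-ary}): there exists an injective map f : 𝒫(κ) → 𝒫(κ) that is a coarse embedding from the hyperballean exp(κ_K) into the hyperballean exp(κ_{K-ary}). -/

import Mathlib

open Set Cardinal

universe u v

variable {X : Type*} {Y : Type*} {P : Type*} {Q : Type*}

/-- The ball around a set: `B(A, r) = ⋃_{y ∈ A} B(y, r)`. -/
def ballSet (B : X → P → Set X) (A : Set X) (r : P) : Set X := ⋃ y ∈ A, B y r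

/-- `B : X → P → Set X` is the ball structure of a ballean with support `X` and radii `P`. -/
def IsBalleanBall (B : X → P → Set X) : Prop :=
  Nonempty P ∧ (∀ x r, x ∈ B x r) ∧ (∀ x y r, x ∈ B y r ↔ y ∈ B x r) ∧
    (∀ r s, ∃ t, ∀ x, ballSet B (B x r) s ⊆ B x t)

/-- A map between balleans is coarse. -/
def IsCoarse (BX : X → P → Set X) (BY : Y → Q → Set Y) (f : X → Y) : Prop :=
  ∀ r, ∃ s, ∀ x, f '' BX x r ⊆ BY (f x) s

/-- A map between balleans is effectively proper. -/
def IsEffectivelyProper (BX : X → P → Set X) (BY : Y → Q → Set Y) (f : X → Y) : Prop :=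
  ∀ s, ∃ r, ∀ x, f ⁻¹' BY (f x) s ⊆ BX x r

/-- A coarse embedding is a map that is both coarse and effectively proper. -/
def IsCoarseEmbedding (BX : X → P → Set X) (BY : Y → Q → Set Y) (f : X → Y) : Prop :=
  IsCoarse BX BY f ∧ IsEffectivelyProper BX BY f

/-- An asymorphism is a bijective map that is both coarse and effectively proper. -/
def IsAsymorphism (BX : X → P → Set X) (BY : Y → Q → Set Y) (f : X → Y) : Prop :=
  Function.Bijective f ∧ IsCoarse BX BY f ∧ IsEffectivelyProper BX BY f

/-- A subset of a ballean is bounded. -/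
def IsBoundedSet (B : X → P → Set X) (A : Set X) : Prop :=
  A = ∅ ∨ ∃ r, ∀ y ∈ A, A ⊆ B y r

/-- A subset of a ballean is large. -/
def IsLargeSet (B : X → P → Set X) (A : Set X) : Prop :=
  ∃ r, ballSet B A r = Set.univ

/-- A subset of a ballean is thick. -/
def IsThickSet (B : X → P → Set X) (A : Set X) : Prop :=
  ∀ r, ∃ x ∈ A, B x r ⊆ A

/-- A subset of a ballean is thin. -/
def IsThinSet (B : X → P → Set X) (A : Set X) : Prop :=
  ∀ r, ∃ V : Set X, IsBoundedSet B V ∧ ∀ x ∈ A \ V, B x r ∩ A = {x}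

/-- A `{0,1}`-valued function on a ballean is slowly oscillating. -/
def IsSlowlyOscillating (B : X → P → Set X) (f : X → Bool) : Prop :=
  ∀ r, ∃ V : Set X, IsBoundedSet B V ∧ ∀ x, x ∉ V → ∀ y ∈ B x r, ∀ z ∈ B x r, f y = f z

/-- A ballean is connected. -/
def IsConnectedBall (B : X → P → Set X) : Prop := ∀ x y, ∃ r, y ∈ B x r

/-- The connected component of a point of a ballean. -/
def balleanComponent (B : X → P → Set X) (x : X) : Set X := {y | ∃ r, y ∈ B x r}

/-- The ball structure of the hyperballean `exp B`. -/
def expBall (B : X → P → Set X) : Set X → P → Set (Set X) :=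
  fun A r => {C | A ⊆ ballSet B C r ∧ C ⊆ ballSet B A r}

/-- The ball structure of the subballean on a subset `S`. -/
def subBall (B : X → P → Set X) (S : Set X) : S → P → Set S :=
  fun y r => {z | (z : X) ∈ B (y : X) r}

/-- An ideal on a set `X`: a family of subsets closed under subsets and finite unions,
containing all finite sets, and not containing `X` itself. -/
def IsIdeal (I : Set (Set X)) : Prop :=
  (∀ A ∈ I, ∀ B ⊆ A, B ∈ I) ∧ (∀ A ∈ I, ∀ B ∈ I, A ∪ B ∈ I) ∧
    (∀ A : Set X, A.Finite → A ∈ I) ∧ Set.univ ∉ I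

/-- The ball structure of the point ideal ballean `X_I`:
`B_I(x,A) = {x}` if `x ∉ A` and `B_I(x,A) = {x} ∪ A` if `x ∈ A`. -/
def pointIdealBall (I : Set (Set X)) : X → I → Set X :=
  fun x A => insert x {y | y ∈ (A : Set X) ∧ x ∈ (A : Set X)}

/-- The ball structure of the `I`-ary ballean `X_{I-ary}`: `B(x,A) = {x} ∪ A`. -/
def aryBall (I : Set (Set X)) : X → I → Set X :=
  fun x A => insert x (A : Set X)

/-- The ball structure of the ballean `C(X,I)` on `𝒫(X)`: `B_C(Z,K) = {W | Z △ W ⊆ K}`. -/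
def cBall (I : Set (Set X)) : Set X → I → Set (Set X) :=
  fun Z K => {W | symmDiff Z W ⊆ (K : Set X)}

/-- The support of the flat hyperballean `X^♭`: all nonempty bounded subsets. -/
def flatSupport (B : X → P → Set X) : Set (Set X) := {A | A.Nonempty ∧ IsBoundedSet B A}

/-- In the canonical well-order of type `κ.ord.ToType`, with `κ` regular, every set of
cardinality `< κ` is bounded above. -/
private lemma stmt12_bdd {κ : Cardinal.{u}} (hκ : κ.IsRegular)
    (S : Set κ.ord.ToType) (hS : #S < κ) : ∃ b, ∀ x ∈ S, x ≤ b := by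
  have hne : Nonempty κ.ord.ToType :=
    Ordinal.toType_nonempty_iff_ne_zero.2 hκ.ord_pos.ne'
  rcases S.eq_empty_or_nonempty with rfl | hSne
  · exact ⟨Classical.arbitrary _, by simp⟩
  · set e := Ordinal.ToType.mk (o := κ.ord) with he
    have hsup : (⨆ x : S, (e.symm x.1).1) < κ.ord := by
      refine Ordinal.iSup_lt_ord ?_ fun i => (e.symm i.1).2
      rw [hκ.cof_eq]; exact hS
    refine ⟨e ⟨_, hsup⟩, fun x hx => ?_⟩
    have h1 : (e.symm x).1 ≤ ⨆ x : S, (e.symm x.1).1 :=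
      Ordinal.le_iSup (fun x : S => (e.symm x.1).1) ⟨x, hx⟩
    have h2 : e.symm x ≤ (⟨_, hsup⟩ : Set.Iio κ.ord) := Subtype.coe_le_coe.mp h1
    have h3 := e.le_iff_le.mpr h2
    simpa using h3

/-- Let `κ` be a regular infinite cardinal (identified with the set `κ.ord.ToType` of
ordinals below `κ`) and `K = {A ⊆ κ : |A| < κ}`. Then `exp(κ_K)` asymorphically embeds into
`exp(κ_{K-ary})`: there is an injective coarse embedding `𝒫(κ) → 𝒫(κ)` from the
hyperballean `exp(κ_K)` into the hyperballean `exp(κ_{K-ary})`. -/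
theorem stmt12 (κ : Cardinal.{u}) (hκ : κ.IsRegular) :
    ∃ f : Set κ.ord.ToType → Set κ.ord.ToType,
      Function.Injective f ∧
      IsCoarseEmbedding (expBall (pointIdealBall {A : Set κ.ord.ToType | #A < κ}))
        (expBall (aryBall {A : Set κ.ord.ToType | #A < κ})) f := by
  classical
  set X := κ.ord.ToType with hXdef
  set K : Set (Set X) := {A : Set X | #A < κ} with hKdef
  -- two injections `X → X` with disjoint ranges
  have hXκ : #X = κ := by rw [hXdef]; exact Cardinal.mk_ord_toType κ
  have hmk : #(X ⊕ X) ≤ #X := by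
    simp only [Cardinal.mk_sum, Cardinal.lift_id, hXκ]
    exact (Cardinal.add_eq_self hκ.aleph0_le).le
  obtain ⟨j⟩ := (Cardinal.le_def _ _).mp hmk
  set i0 : X → X := fun x => j (Sum.inl x) with hi0def
  set i1 : X → X := fun x => j (Sum.inr x) with hi1def
  have hi0 : Function.Injective i0 := fun a b h => by simpa using j.injective h
  have hi1 : Function.Injective i1 := fun a b h => by simpa using j.injective h
  have hdisj : ∀ a b : X, i0 a ≠ i1 b := fun a b h => by simpa using j.injective h
  -- the set of minima of a set (empty if the set is empty, a singleton otherwise)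
  set m : Set X → Set X := fun A => {x | x ∈ A ∧ ∀ y ∈ A, x ≤ y} with hmdef
  have exists_min : ∀ A : Set X, A.Nonempty → ∃ x, x ∈ A ∧ (∀ y ∈ A, x ≤ y) ∧ m A = {x} := by
    intro A hA
    have wf : WellFounded ((· < ·) : X → X → Prop) := IsWellFounded.wf
    refine ⟨wf.min A hA, wf.min_mem A hA,
      fun y hy => not_lt.mp (wf.not_lt_min A hy), ?_⟩
    ext x
    constructor
    · rintro ⟨hxA, hx⟩
      have h1 : x ≤ wf.min A hA := hx _ (wf.min_mem A hA)
      have h2 : wf.min A hA ≤ x := not_lt.mp (wf.not_lt_min A hxA)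
      exact le_antisymm h1 h2
    · rintro rfl
      exact ⟨wf.min_mem A hA, fun y hy => not_lt.mp (wf.not_lt_min A hy)⟩
  have hm_empty : m (∅ : Set X) = ∅ := by
    ext x; simp [hmdef]
  -- the embedding
  set f : Set X → Set X := fun A => i0 '' A ∪ i1 '' (m A) with hfdef
  have hf_empty : f (∅ : Set X) = ∅ := by
    simp [hfdef, hm_empty]
  -- recovery of `A` and `m A` from `f A`
  have hrec0 : ∀ A : Set X, i0 ⁻¹' (f A) = A := by
    intro A
    ext x
    simp only [hfdef, Set.mem_preimage, Set.mem_union, Set.mem_image]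
    constructor
    · rintro (⟨a, ha, h⟩ | ⟨a, ha, h⟩)
      · rwa [← hi0 h]
      · exact absurd h.symm (hdisj x a)
    · exact fun h => Or.inl ⟨x, h, rfl⟩
  have hrec1 : ∀ A : Set X, i1 ⁻¹' (f A) = m A := by
    intro A
    ext x
    simp only [hfdef, Set.mem_preimage, Set.mem_union, Set.mem_image]
    constructor
    · rintro (⟨a, ha, h⟩ | ⟨a, ha, h⟩)
      · exact absurd h (hdisj a x)
      · rwa [← hi1 h]
    · exact fun h => Or.inr ⟨x, h, rfl⟩
  have hinj : Function.Injective f := by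
    intro A C h
    rw [← hrec0 A, ← hrec0 C, h]
  -- nonemptyness of `f A`
  have hf_ne : ∀ A : Set X, A.Nonempty → (f A).Nonempty := by
    rintro A ⟨a, ha⟩
    exact ⟨i0 a, Or.inl ⟨a, ha, rfl⟩⟩
  have hf_ne' : ∀ A : Set X, (f A = ∅) → A = ∅ := by
    intro A h
    by_contra hA
    obtain ⟨x, hx⟩ := hf_ne A (Set.nonempty_iff_ne_empty.mpr hA)
    rw [h] at hx
    exact hx
  -- membership in the two kinds of ball sets
  have mem_ary : ∀ (C : Set X) (R : ↥K) (x : X),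
      x ∈ ballSet (aryBall K) C R ↔ x ∈ C ∨ ((∃ y, y ∈ C) ∧ x ∈ (R : Set X)) := by
    intro C R x
    constructor
    · intro hx
      simp only [ballSet, Set.mem_iUnion, exists_prop] at hx
      obtain ⟨y, hyC, hy⟩ := hx
      simp only [aryBall, Set.mem_insert_iff] at hy
      rcases hy with rfl | hxR
      · exact Or.inl hyC
      · exact Or.inr ⟨⟨y, hyC⟩, hxR⟩
    · intro hx
      rcases hx with hxC | ⟨⟨y, hyC⟩, hxR⟩
      · exact Set.mem_biUnion hxC (Set.mem_insert _ _)
      · exact Set.mem_biUnion hyC (by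
          simp only [aryBall, Set.mem_insert_iff]
          exact Or.inr hxR)
  have mem_pt : ∀ (C : Set X) (R : ↥K) (x : X),
      x ∈ ballSet (pointIdealBall K) C R ↔
        x ∈ C ∨ ((∃ y ∈ C, y ∈ (R : Set X)) ∧ x ∈ (R : Set X)) := by
    intro C R x
    constructor
    · intro hx
      simp only [ballSet, Set.mem_iUnion, exists_prop] at hx
      obtain ⟨y, hyC, hy⟩ := hx
      simp only [pointIdealBall, Set.mem_insert_iff, Set.mem_setOf_eq] at hy
      rcases hy with rfl | ⟨hxR, hyR⟩
      · exact Or.inl hyC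
      · exact Or.inr ⟨⟨y, hyC, hyR⟩, hxR⟩
    · intro hx
      rcases hx with hxC | ⟨⟨y, hyC, hyR⟩, hxR⟩
      · exact Set.mem_biUnion hxC (Set.mem_insert _ _)
      · exact Set.mem_biUnion hyC (by
          simp only [pointIdealBall, Set.mem_insert_iff, Set.mem_setOf_eq]
          exact Or.inr ⟨hxR, hyR⟩)
  have ball_pt_empty : ∀ R : ↥K, ballSet (pointIdealBall K) (∅ : Set X) R = ∅ := by
    intro R
    ext x
    simp [mem_pt]
  have ball_ary_empty : ∀ R : ↥K, ballSet (aryBall K) (∅ : Set X) R = ∅ := by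
    intro R
    ext x
    simp [mem_ary]
  -- smallness facts
  have small_union : ∀ S T : Set X, #S < κ → #T < κ → #(S ∪ T : Set X) < κ := by
    intro S T hS hT
    exact (Cardinal.mk_union_le S T).trans_lt (Cardinal.add_lt_of_lt hκ.aleph0_le hS hT)
  have small_Iic : ∀ b : X, #(Set.Iic b) < κ := by
    intro b
    rw [← Set.Iio_insert]
    refine Cardinal.mk_insert_le.trans_lt (Cardinal.add_lt_of_lt hκ.aleph0_le
      (Cardinal.mk_Iio_ord_toType b) (lt_of_lt_of_le Cardinal.one_lt_aleph0 hκ.aleph0_le))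
  refine ⟨f, hinj, ?_, ?_⟩
  -- coarseness
  · intro R
    obtain ⟨b, hb⟩ := stmt12_bdd hκ (R : Set X) R.2
    have hsmall : #(i0 '' Set.Iic b ∪ i1 '' Set.Iic b : Set X) < κ :=
      small_union _ _ (Cardinal.mk_image_le.trans_lt (small_Iic b))
        (Cardinal.mk_image_le.trans_lt (small_Iic b))
    refine ⟨⟨i0 '' Set.Iic b ∪ i1 '' Set.Iic b, hsmall⟩, ?_⟩
    intro A
    rintro _ ⟨C, hC, rfl⟩
    obtain ⟨h1, h2⟩ := hC
    -- degenerate cases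
    rcases eq_or_ne C ∅ with rfl | hCne
    · rw [ball_pt_empty] at h1
      have hA : A = ∅ := Set.subset_empty_iff.mp h1
      subst hA
      constructor <;> simp [hf_empty]
    rcases eq_or_ne A ∅ with rfl | hAne
    · rw [ball_pt_empty] at h2
      exact absurd (Set.subset_empty_iff.mp h2) hCne
    have hAne' : A.Nonempty := Set.nonempty_iff_ne_empty.mpr hAne
    have hCne' : C.Nonempty := Set.nonempty_iff_ne_empty.mpr hCne
    obtain ⟨mA, hmA_mem, hmA_min, hmA⟩ := exists_min A hAne'
    obtain ⟨mC, hmC_mem, hmC_min, hmC⟩ := exists_min C hCne'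
    -- symmetric difference is below `b`
    have hAC : ∀ a ∈ A, a ∉ C → a ≤ b := by
      intro a ha hanC
      rcases (mem_pt C R a).mp (h1 ha) with h | ⟨_, haR⟩
      · exact absurd h hanC
      · exact hb a haR
    have hCA : ∀ c ∈ C, c ∉ A → c ≤ b := by
      intro c hc hcnA
      rcases (mem_pt A R c).mp (h2 hc) with h | ⟨_, hcR⟩
      · exact absurd h hcnA
      · exact hb c hcR
    -- the minima are either equal or both below `b`
    have hmm : mA = mC ∨ (mA ≤ b ∧ mC ≤ b) := by
      rcases eq_or_ne mA mC with h | h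
      · exact Or.inl h
      rcases lt_or_gt_of_ne h with hlt | hgt
      · -- mA < mC, so mA ∉ C
        have hmAnC : mA ∉ C := fun hmem => absurd (hmC_min mA hmem) (not_le.mpr hlt)
        rcases (mem_pt C R mA).mp (h1 hmA_mem) with hh | ⟨⟨y, hyC, hyR⟩, hmAR⟩
        · exact absurd hh hmAnC
        · exact Or.inr ⟨hb _ hmAR, (hmC_min y hyC).trans (hb _ hyR)⟩
      · have hmCnA : mC ∉ A := fun hmem => absurd (hmA_min mC hmem) (not_le.mpr hgt)
        rcases (mem_pt A R mC).mp (h2 hmC_mem) with hh | ⟨⟨y, hyA, hyR⟩, hmCR⟩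
        · exact absurd hh hmCnA
        · exact Or.inr ⟨(hmA_min y hyA).trans (hb _ hyR), hb _ hmCR⟩
    -- both inclusions for the target ball
    have half : ∀ A' C' : Set X, C'.Nonempty →
        (∀ a ∈ A', a ∉ C' → a ≤ b) → (∀ x, x ∈ m A' → x ∈ m C' ∨ x ≤ b) →
        f A' ⊆ ballSet (aryBall K)
          (f C') ⟨i0 '' Set.Iic b ∪ i1 '' Set.Iic b, hsmall⟩ := by
      intro A' C' hC'ne hsub hmin
      intro x hx
      rw [mem_ary]
      have hfC'ne : (f C').Nonempty := hf_ne C' hC'ne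
      rcases hx with ⟨a, ha, rfl⟩ | ⟨a, ha, rfl⟩
      · by_cases haC : a ∈ C'
        · exact Or.inl (Or.inl ⟨a, haC, rfl⟩)
        · exact Or.inr ⟨hfC'ne, Or.inl ⟨a, hsub a ha haC, rfl⟩⟩
      · rcases hmin a ha with hh | hh
        · exact Or.inl (Or.inr ⟨a, hh, rfl⟩)
        · exact Or.inr ⟨hfC'ne, Or.inr ⟨a, hh, rfl⟩⟩
    constructor
    · refine half A C hCne' hAC ?_
      intro x hx
      rw [hmA, Set.mem_singleton_iff] at hx
      subst hx
      rcases hmm with h | h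
      · rw [hmC]
        exact Or.inl (h ▸ rfl)
      · exact Or.inr h.1
    · refine half C A hAne' hCA ?_
      intro x hx
      rw [hmC, Set.mem_singleton_iff] at hx
      subst hx
      rcases hmm with h | h
      · rw [hmA]
        exact Or.inl (h ▸ Set.mem_singleton _)
      · exact Or.inr h.2
  -- effective properness
  · intro S
    have hD : #(i0 ⁻¹' (S : Set X) ∪ i1 ⁻¹' (S : Set X) : Set X) < κ :=
      small_union _ _ ((Cardinal.mk_preimage_of_injective i0 _ hi0).trans_lt S.2)
        ((Cardinal.mk_preimage_of_injective i1 _ hi1).trans_lt S.2)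
    obtain ⟨b, hb⟩ := stmt12_bdd hκ _ hD
    have hb0 : ∀ x : X, i0 x ∈ (S : Set X) → x ≤ b := fun x hx =>
      hb x (Or.inl hx)
    have hb1 : ∀ x : X, i1 x ∈ (S : Set X) → x ≤ b := fun x hx =>
      hb x (Or.inr hx)
    refine ⟨⟨Set.Iic b, small_Iic b⟩, ?_⟩
    intro A C hC
    obtain ⟨h1, h2⟩ := hC
    -- degenerate cases
    rcases eq_or_ne A ∅ with rfl | hAne
    · rw [hf_empty, ball_ary_empty] at h2
      have hC0 : C = ∅ := hf_ne' C (Set.subset_empty_iff.mp h2)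
      subst hC0
      exact ⟨by simp [ball_pt_empty], by simp [ball_pt_empty]⟩
    rcases eq_or_ne C ∅ with rfl | hCne
    · rw [hf_empty, ball_ary_empty] at h1
      exact absurd (hf_ne' A (Set.subset_empty_iff.mp h1)) hAne
    have hAne' : A.Nonempty := Set.nonempty_iff_ne_empty.mpr hAne
    have hCne' : C.Nonempty := Set.nonempty_iff_ne_empty.mpr hCne
    obtain ⟨mA, hmA_mem, hmA_min, hmA⟩ := exists_min A hAne'
    obtain ⟨mC, hmC_mem, hmC_min, hmC⟩ := exists_min C hCne'
    -- consequences of the `ary` ball conditions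
    have dA : ∀ a ∈ A, a ∈ C ∨ a ≤ b := by
      intro a ha
      have : i0 a ∈ ballSet (aryBall K) (f C) S := h1 (Or.inl ⟨a, ha, rfl⟩)
      rcases (mem_ary _ _ _).mp this with h | ⟨_, h⟩
      · have : a ∈ i0 ⁻¹' (f C) := h
        rw [hrec0] at this
        exact Or.inl this
      · exact Or.inr (hb0 a h)
    have dC : ∀ c ∈ C, c ∈ A ∨ c ≤ b := by
      intro c hc
      have : i0 c ∈ ballSet (aryBall K) (f A) S := h2 (Or.inl ⟨c, hc, rfl⟩)
      rcases (mem_ary _ _ _).mp this with h | ⟨_, h⟩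
      · have : c ∈ i0 ⁻¹' (f A) := h
        rw [hrec0] at this
        exact Or.inl this
      · exact Or.inr (hb0 c h)
    have dmA : mA = mC ∨ mA ≤ b := by
      have hmem : i1 mA ∈ f A := Or.inr ⟨mA, by rw [hmA]; rfl, rfl⟩
      have : i1 mA ∈ ballSet (aryBall K) (f C) S := h1 hmem
      rcases (mem_ary _ _ _).mp this with h | ⟨_, h⟩
      · have : mA ∈ i1 ⁻¹' (f C) := h
        rw [hrec1, hmC, Set.mem_singleton_iff] at this
        exact Or.inl this
      · exact Or.inr (hb1 mA h)
    have dmC : mC = mA ∨ mC ≤ b := by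
      have hmem : i1 mC ∈ f C := Or.inr ⟨mC, by rw [hmC]; rfl, rfl⟩
      have : i1 mC ∈ ballSet (aryBall K) (f A) S := h2 hmem
      rcases (mem_ary _ _ _).mp this with h | ⟨_, h⟩
      · have : mC ∈ i1 ⁻¹' (f A) := h
        rw [hrec1, hmA, Set.mem_singleton_iff] at this
        exact Or.inl this
      · exact Or.inr (hb1 mC h)
    -- conclude: both inclusions for the point-ideal ball of radius `Iic b`
    have hmCb : mC ≤ b ∨ A ⊆ C := by
      by_cases hsub : A ⊆ C
      · exact Or.inr hsub
      obtain ⟨a, ha, hanC⟩ := Set.not_subset.mp hsub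
      have hab : a ≤ b := (dA a ha).resolve_left hanC
      rcases dmC with h | h
      · exact Or.inl (h ▸ ((hmA_min a ha).trans hab))
      · exact Or.inl h
    have hmAb : mA ≤ b ∨ C ⊆ A := by
      by_cases hsub : C ⊆ A
      · exact Or.inr hsub
      obtain ⟨c, hc, hcnA⟩ := Set.not_subset.mp hsub
      have hcb : c ≤ b := (dC c hc).resolve_left hcnA
      rcases dmA with h | h
      · exact Or.inl (h ▸ ((hmC_min c hc).trans hcb))
      · exact Or.inl h
    constructor
    · -- A ⊆ ballSet pt C (Iic b)
      intro a ha
      rw [mem_pt]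
      by_cases haC : a ∈ C
      · exact Or.inl haC
      have hab : a ≤ b := (dA a ha).resolve_left haC
      have hmCb' : mC ≤ b := by
        rcases hmCb with h | h
        · exact h
        · exact absurd (h ha) haC
      exact Or.inr ⟨⟨mC, hmC_mem, hmCb'⟩, hab⟩
    · -- C ⊆ ballSet pt A (Iic b)
      intro c hc
      rw [mem_pt]
      by_cases hcA : c ∈ A
      · exact Or.inl hcA
      have hcb : c ≤ b := (dC c hc).resolve_left hcA
      have hmAb' : mA ≤ b := by
        rcases hmAb with h | h
        · exact h
        · exact absurd (h hc) hcA
      exact Or.inr ⟨⟨mA, hmA_mem, hmAb'⟩, hcb⟩
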